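/- Fix an odd positive integer k. The family of functions n ↦ a_{k,ℓ}(n), indexed by odd integers ℓ > k and regarded as elements of the ℂ-vector space of functions from the positive integers to ℂ, is linearly independent over ℂ: every finite nontrivial ℂ-linear combination of distinct members of the family is a nonzero function. -/

import Mathlib

/-- `σ_s(n) = ∑_{d ∣ n} d^s`, as an integer. -/
def sigmaZ (s n : ℕ) : ℤ := ∑ d ∈ n.divisors, (d : ℤ) ^ s

/-- `a_{k,ℓ}(n) = (n^{3ℓ}+n^{2ℓ}+n^ℓ+1)·σ_{3k}(n) − (n^{3k}+n^{2k}+n^k+1)·σ_{3ℓ}(n)`. -/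
def aFun (k l n : ℕ) : ℤ :=
  ((n : ℤ) ^ (3 * l) + (n : ℤ) ^ (2 * l) + (n : ℤ) ^ l + 1) * sigmaZ (3 * k) n
    - ((n : ℤ) ^ (3 * k) + (n : ℤ) ^ (2 * k) + (n : ℤ) ^ k + 1) * sigmaZ (3 * l) n

open Polynomial in
/-- The polynomial over `ℂ` whose value at a prime `p` is `a_{k,ℓ}(p)`. -/
noncomputable def Qpoly (k l : ℕ) : Polynomial ℂ :=
  X ^ (2*l+3*k) + X ^ (l+3*k) + X ^ (2*l) + X ^ l
    - X ^ (3*l+2*k) - X ^ (3*l+k) - X ^ (2*k) - X ^ k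

lemma sigmaZ_prime (s p : ℕ) (hp : p.Prime) : sigmaZ s p = 1 + (p:ℤ)^s := by
  rw [sigmaZ, hp.divisors, Finset.sum_pair hp.one_lt.ne]
  simp

lemma aFun_prime (k l p : ℕ) (hp : p.Prime) :
    ((aFun k l p : ℤ) : ℂ) = (Qpoly k l).eval (p : ℂ) := by
  unfold aFun
  rw [sigmaZ_prime _ _ hp, sigmaZ_prime _ _ hp]
  simp only [Qpoly, Polynomial.eval_add, Polynomial.eval_sub, Polynomial.eval_pow,
    Polynomial.eval_X]
  push_cast
  ring

lemma coeff_Qpoly_lt (k l l' : ℕ) (h1 : k < l') (h2 : l' < l) :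
    (Qpoly k l').coeff (3*l+2*k) = 0 := by
  simp only [Qpoly, Polynomial.coeff_sub, Polynomial.coeff_add, Polynomial.coeff_X_pow]
  split_ifs <;> first | omega | ring

lemma coeff_Qpoly_self (k l : ℕ) (hk : 0 < k) (h : k < l) :
    (Qpoly k l).coeff (3*l+2*k) = -1 := by
  simp only [Qpoly, Polynomial.coeff_sub, Polynomial.coeff_add, Polynomial.coeff_X_pow]
  split_ifs <;> first | omega | ring

lemma key (k : ℕ) (hkpos : 0 < k) (s : Finset {l : ℕ // Odd l ∧ k < l}) :
    ∀ g : {l : ℕ // Odd l ∧ k < l} → ℂ,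
      (∀ p : ℕ, p.Prime → ∑ i ∈ s, g i * ((aFun k (i:ℕ) p : ℤ) : ℂ) = 0) →
      ∀ i ∈ s, g i = 0 := by
  induction s using Finset.induction_on_max with
  | empty => simp
  | insert a s ha ih =>
    intro g hsum
    have hans : a ∉ s := fun h => lt_irrefl a (ha a h)
    set P : Polynomial ℂ := ∑ j ∈ insert a s, Polynomial.C (g j) * Qpoly k (j:ℕ) with hP
    have hroot : ∀ p : ℕ, p.Prime → P.IsRoot (p : ℂ) := by
      intro p hp
      have := hsum p hp
      simp only [Polynomial.IsRoot, hP, Polynomial.eval_finset_sum, Polynomial.eval_mul,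
        Polynomial.eval_C]
      rw [← this]
      refine Finset.sum_congr rfl fun j _ => ?_
      rw [aFun_prime _ _ _ hp]
    have hP0 : P = 0 := by
      apply Polynomial.eq_zero_of_infinite_isRoot
      have h1 : Set.Infinite ((fun n : ℕ => (n:ℂ)) '' {p | p.Prime}) :=
        Set.Infinite.image (Set.injOn_of_injective Nat.cast_injective)
          Nat.infinite_setOf_prime
      refine h1.mono ?_
      rintro x ⟨p, hp, rfl⟩
      exact hroot p hp
    have hga : g a = 0 := by
      have hc := congrArg (fun Q => Polynomial.coeff Q (3*(a:ℕ)+2*k)) hP0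
      simp only [hP, Polynomial.finset_sum_coeff, Polynomial.coeff_C_mul,
        Polynomial.coeff_zero] at hc
      rw [Finset.sum_insert hans, coeff_Qpoly_self k _ hkpos a.2.2,
        Finset.sum_eq_zero (fun j hj => by
          rw [coeff_Qpoly_lt k _ _ j.2.2 (Subtype.coe_lt_coe.mpr (ha j hj))]; ring)] at hc
      simpa using hc
    have hsum' : ∀ p : ℕ, p.Prime → ∑ i ∈ s, g i * ((aFun k (i:ℕ) p : ℤ) : ℂ) = 0 := by
      intro p hp
      have := hsum p hp
      rwa [Finset.sum_insert hans, hga, zero_mul, zero_add] at this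
    intro i hi
    rcases Finset.mem_insert.mp hi with rfl | hi'
    · exact hga
    · exact ih g hsum' i hi'

/-- For fixed odd `k ≥ 1`, the coefficient functions `n ↦ a_{k,ℓ}(n)`, indexed by odd
`ℓ > k`, are linearly independent over `ℂ` as functions on the positive integers. -/
theorem aFun_linearIndependent (k : ℕ) (hk : Odd k) (hkpos : 0 < k) :
    LinearIndependent ℂ
      (fun l : {l : ℕ // Odd l ∧ k < l} => fun n : ℕ+ => (aFun k (l : ℕ) (n : ℕ) : ℂ)) := by
  rw [linearIndependent_iff']
  intro s g hsum i hi
  refine key k hkpos s g ?_ i hi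
  intro p hp
  have := congrFun hsum ⟨p, hp.pos⟩
  exact (Finset.sum_apply (⟨p, hp.pos⟩ : ℕ+) s
    (fun i => g i • fun n : ℕ+ => (aFun k (i : ℕ) (n : ℕ) : ℂ))).symm.trans this
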